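/- Let a, b : [0,T] → ℝ be positive differentiable functions with a(0) ≤ b(0), satisfying a' = −ε a b − ε R and b' = −ε a b − ε R for a common function R, on [0,T]. Suppose moreover that for all t ∈ [0,T]: b(t) ≥ a(t) > (3/4)a(0), |R(t)| ≤ (3/8)a(0) b(t) + ((1/4)a(0) + (1/16)b(0)) a(t), and b(0) − b(t) ≤ (1/4)a(0). If additionally a(0) ≥ 1/B for some B ≥ 1, then a'(t) ≤ −(ε/(16 B)) a(t) for all t ∈ [0,T], and consequently a(T) ≤ a(0) exp(−ε T/(16 B)). -/

import Mathlib

/-- Differential inequality analysis of Step 3, Case b) in the proof of Theorem 1: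
under the stated bounds on the averages `a = n̄₁`, `b = n̄₂` and the fluctuation
correlation `R`, the average `a` decays exponentially with rate `ε/(16B)`. -/
theorem stmt_7 (a b R : ℝ → ℝ) (ε B T : ℝ)
    (hε : 0 < ε) (hB : 1 ≤ B) (hT : 0 ≤ T)
    (hab0 : a 0 ≤ b 0)
    (ha : ∀ t ∈ Set.Icc (0 : ℝ) T, HasDerivAt a (-ε * a t * b t - ε * R t) t)
    (hb : ∀ t ∈ Set.Icc (0 : ℝ) T, HasDerivAt b (-ε * a t * b t - ε * R t) t)
    (hpos : ∀ t ∈ Set.Icc (0 : ℝ) T, 0 < a t ∧ a t ≤ b t)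
    (hlow : ∀ t ∈ Set.Icc (0 : ℝ) T, (3 / 4) * a 0 < a t)
    (hR : ∀ t ∈ Set.Icc (0 : ℝ) T,
      |R t| ≤ (3 / 8) * a 0 * b t + ((1 / 4) * a 0 + (1 / 16) * b 0) * a t)
    (hbdrop : ∀ t ∈ Set.Icc (0 : ℝ) T, b 0 - b t ≤ (1 / 4) * a 0)
    (hB' : 1 / B ≤ a 0) :
    (∀ t ∈ Set.Icc (0 : ℝ) T,
      -ε * a t * b t - ε * R t ≤ -(ε / (16 * B)) * a t) ∧
      a T ≤ a 0 * Real.exp (-(ε * T) / (16 * B)) := by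
  have hB0 : (0 : ℝ) < B := lt_of_lt_of_le one_pos hB
  have ha0 : (0 : ℝ) < a 0 := lt_of_lt_of_le (by positivity) hB'
  set c : ℝ := ε / (16 * B) with hc
  have hc0 : 0 < c := by positivity
  have key : ∀ t ∈ Set.Icc (0 : ℝ) T,
      -ε * a t * b t - ε * R t ≤ -c * a t := by
    intro t ht
    obtain ⟨hat, hatb⟩ := hpos t ht
    have hlow' := hlow t ht
    have hRt := hR t ht
    have hbd := hbdrop t ht
    have hRt' : -R t ≤ (3 / 8) * a 0 * b t + ((1 / 4) * a 0 + (1 / 16) * b 0) * a t :=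
      (neg_le_abs _).trans hRt
    -- main algebraic inequality
    have hBa : 1 ≤ B * a 0 := by
      have := (div_le_iff₀ hB0).mp hB'
      linarith
    have hgoal : (1 / (16 * B)) * a t ≤ a t * b t + R t := by
      have h1 : (1 / (16 * B)) * a t ≤ (1 / 16) * a 0 * a t := by
        rw [div_mul_eq_mul_div, div_le_iff₀ (by positivity)]
        nlinarith [hat.le, hBa]
      have hbt : 0 < b t := lt_of_lt_of_le hat hatb
      have h2 : (1 / 16) * a 0 * a t ≤ a t * b t + R t := by
        nlinarith [mul_pos hat hbt, mul_lt_mul_of_pos_right hlow' hbt,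
          mul_lt_mul_of_pos_left (hlow'.trans_le hatb) hat, hRt', hbd]
      linarith
    have hmul := mul_le_mul_of_nonneg_left hgoal hε.le
    have hce : c * a t = ε * ((1 / (16 * B)) * a t) := by
      rw [hc]; ring
    nlinarith [hmul, hce]
  refine ⟨key, ?_⟩
  -- Gronwall
  set g : ℝ → ℝ := fun t => a t * Real.exp (c * t) with hg
  have hgd : ∀ t ∈ Set.Icc (0 : ℝ) T,
      HasDerivAt g ((-ε * a t * b t - ε * R t) * Real.exp (c * t) + a t * (c * Real.exp (c * t))) t := by
    intro t ht
    have he : HasDerivAt (fun s => Real.exp (c * s)) (c * Real.exp (c * t)) t := by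
      have h := ((hasDerivAt_id t).const_mul c).exp
      simp only [id_eq, mul_one] at h
      convert h using 1
      ring
    exact (ha t ht).mul he
  have hmono : AntitoneOn g (Set.Icc 0 T) := by
    apply antitoneOn_of_deriv_nonpos (convex_Icc 0 T)
    · exact fun t ht => ((hgd t ht).continuousAt).continuousWithinAt
    · intro t ht
      exact ((hgd t (interior_subset ht)).differentiableAt).differentiableWithinAt
    · intro t ht
      rw [(hgd t (interior_subset ht)).deriv]
      have hk := key t (interior_subset ht)
      have hexp : 0 < Real.exp (c * t) := Real.exp_pos _
      nlinarith [mul_le_mul_of_nonneg_right hk hexp.le]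
  have h0T : g T ≤ g 0 := hmono (Set.left_mem_Icc.mpr hT) (Set.right_mem_Icc.mpr hT) hT
  have hg0 : g 0 = a 0 := by simp [hg]
  have : a T * Real.exp (c * T) ≤ a 0 := by rwa [hg0] at h0T
  have hexpT : 0 < Real.exp (c * T) := Real.exp_pos _
  have heq : Real.exp (-(ε * T) / (16 * B)) = (Real.exp (c * T))⁻¹ := by
    rw [← Real.exp_neg]
    congr 1
    field_simp [hc]
    rw [hc]; field_simp
  rw [heq, ← div_eq_mul_inv, le_div_iff₀ hexpT]
  linarith
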